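/- arXiv:2507.10168 — 2 statements merged into one kernel-verified Lean document; each statement's English description precedes it below -/
import Mathlib

section
/- Let S be a left cancellative monoid and let X ∈ J(S) be a nonempty constructible right ideal. Then X is not contained in any finite union ⋃_{j=1}^n (X^j ∖ (X^j_1 ∪ ⋯ ∪ X^j_{m_j})) in which all X^j, X^j_i ∈ J(S) and, for each j, the family {X^j_1, …, X^j_{m_j}} is a foundation set for X^j. -/
open scoped Classical

namespace SgC

variable {M : Type*}

/-- Composition of partial maps (`g` after `f`). -/
def pcomp (g f : M → Option M) : M → Option M := fun s => (f s).bind g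

/-- The canonical partial inverse of a partial map (the genuine inverse when the map
is injective on its domain, as is the case for all maps in the left inverse hull of a
left cancellative monoid). -/
noncomputable def pinv (f : M → Option M) : M → Option M :=
  fun t => if h : ∃ s, f s = some t then some h.choose else none

/-- Left translation `t ↦ s * t` as an everywhere-defined partial map. -/
def ptransl [Mul M] (s : M) : M → Option M := fun t => some (s * t)

/-- The identity partial map. -/
def pid : M → Option M := fun s => some s

/-- The block `q⁻¹ ∘ p`: first multiply on the left by `p`, then remove `q` on the left. -/
noncomputable def pblock [Mul M] (p : M × M) : M → Option M :=
  pcomp (pinv (ptransl p.2)) (ptransl p.1)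

/-- Membership in the left inverse hull `I_ℓ(M)`: `h` is of the form
`s₂ₙ⁻¹ s₂ₙ₋₁ ⋯ s₂⁻¹ s₁` for some `n ≥ 1` and `sᵢ ∈ M` (the list records the pairs
`(s₁,s₂), (s₃,s₄), …`, applied left to right). -/
def InInvHull [Mul M] (h : M → Option M) : Prop :=
  ∃ l : List (M × M), l ≠ [] ∧
    h = l.foldl (fun acc p => pcomp (pblock p) acc) pid

/-- Membership in the inverse hull generated by translations by elements of `σ` only
(used for canonical copies of `I_ℓ(S)` inside partial maps of a larger monoid). -/
def InInvHullOn [Mul M] (σ : Set M) (h : M → Option M) : Prop :=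
  ∃ l : List (M × M), l ≠ [] ∧ (∀ p ∈ l, p.1 ∈ σ ∧ p.2 ∈ σ) ∧
    h = l.foldl (fun acc p => pcomp (pblock p) acc) pid

/-- Domain of a partial map. -/
def pdom (h : M → Option M) : Set M := {s | h s ≠ none}

/-- `h` fixes the set `Y` pointwise (in particular `Y ⊆ dom h`). -/
def PFixes (h : M → Option M) (Y : Set M) : Prop := ∀ s ∈ Y, h s = some s

/-- Preimage of a set under a partial map. -/
def ppre (h : M → Option M) (X : Set M) : Set M := {s | ∃ x ∈ X, h s = some x}

/-- Constructible right ideals: domains of elements of the left inverse hull. -/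
def IsConstructible [Mul M] (X : Set M) : Prop := ∃ h, InInvHull h ∧ X = pdom h

/-- Membership in `J̄(S)`: sets of the form `X₀` or `X₀ ∖ (X₁ ∪ ⋯ ∪ Xₘ)` with all
`Xᵢ` constructible. -/
def IsConstructibleBar [Mul M] (X : Set M) : Prop :=
  ∃ (X₀ : Set M) (m : ℕ) (Xi : Fin m → Set M),
    IsConstructible X₀ ∧ (∀ i, IsConstructible (Xi i)) ∧ X = X₀ \ ⋃ i, Xi i

/-- `Xi` is a foundation family for `X`: each `Xi i ⊆ X` and every nonempty
constructible right ideal contained in `X` intersects some `Xi i`. -/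
def IsFoundation [Mul M] (X : Set M) {ι : Type*} (Xi : ι → Set M) : Prop :=
  (∀ i, Xi i ⊆ X) ∧
  ∀ Y : Set M, IsConstructible Y → Y.Nonempty → Y ⊆ X → ∃ i, (Y ∩ Xi i).Nonempty

/-- Strong C*-regularity. -/
def StronglyRegular (M : Type*) [Monoid M] : Prop :=
  ∀ (n : ℕ) (h : Fin n → M → Option M), (∀ k, InInvHull (h k)) →
  ∀ (m : ℕ) (X : Set M) (Xi : Fin m → Set M),
    IsConstructible X → (∀ i, IsConstructible (Xi i)) →
    (X \ ⋃ i, Xi i).Nonempty →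
    (X \ ⋃ i, Xi i) ⊆ ⋃ k, {s | h k s = some s} →
    ∃ (l : ℕ) (Y : Fin l → Set M) (kk : Fin l → Fin n),
      (∀ j, IsConstructible (Y j)) ∧
      (X \ ⋃ i, Xi i) ⊆ ⋃ j, Y j ∧
      ∀ j, PFixes (h (kk j)) (Y j)

/-- C*-regularity. -/
def Regular (M : Type*) [Monoid M] : Prop :=
  ∀ (n : ℕ) (h : Fin n → M → Option M), (∀ k, InInvHull (h k)) →
  ∀ X : Set M, IsConstructibleBar X → X.Nonempty →
    X ⊆ ⋃ k, {s | h k s = some s} →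
    ∃ (l : ℕ) (Y : Fin l → Set M) (kk : Fin l → Fin n),
      (∀ j, IsConstructibleBar (Y j)) ∧ X ⊆ ⋃ j, Y j ∧
      ∀ j, PFixes (h (kk j)) (Y j)

/-- Strong C*-regularity on the boundary. -/
def StronglyRegularOnBoundary (M : Type*) [Monoid M] : Prop :=
  ∀ (n : ℕ) (h : Fin n → M → Option M), (∀ k, InInvHull (h k)) →
  ∀ (m : ℕ) (X : Set M) (Xi : Fin m → Set M),
    IsConstructible X → (∀ i, IsConstructible (Xi i)) → (∀ i, Xi i ⊆ X) →
    (X \ ⋃ i, Xi i).Nonempty →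
    (X \ ⋃ i, Xi i) ⊆ ⋃ k, {s | h k s = some s} →
    ∃ (l : ℕ) (Y : Fin l → Set M) (kk : Fin l → Fin n),
      (∀ j, IsConstructible (Y j)) ∧ (∀ j, PFixes (h (kk j)) (Y j)) ∧
      IsFoundation X (Sum.elim Xi Y)

/-- C*-regularity on the boundary. -/
def RegularOnBoundary (M : Type*) [Monoid M] : Prop :=
  ∀ (n : ℕ) (h : Fin n → M → Option M), (∀ k, InInvHull (h k)) →
  ∀ (m : ℕ) (X : Set M) (Xi : Fin m → Set M),
    IsConstructible X → (∀ i, IsConstructible (Xi i)) → (∀ i, Xi i ⊆ X) →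
    (X \ ⋃ i, Xi i).Nonempty →
    (X \ ⋃ i, Xi i) ⊆ ⋃ k, {s | h k s = some s} →
    ∃ (l : ℕ) (Y : Fin l → Set M) (kk : Fin l → Fin n),
      (∀ j, IsConstructibleBar (Y j)) ∧ (∀ j, PFixes (h (kk j)) (Y j)) ∧
      IsFoundation X (Sum.elim Xi Y)

/-- The type of constructible right ideals `J(M)`. -/
def CIdeal (M : Type*) [Mul M] : Type _ := {X : Set M // IsConstructible X}

/-- The character space `{0,1}^{J(M)}` with the topology of pointwise convergence. -/
abbrev CharSpace (M : Type*) [Mul M] : Type _ := CIdeal M → Bool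

/-- The principal character `χ_s`. -/
noncomputable def princhar [Mul M] (s : M) : CharSpace M :=
  fun X => decide (s ∈ X.1)

/-- `Ω(M)`: the closure of the set of principal characters. -/
noncomputable def Omega (M : Type*) [Mul M] : Set (CharSpace M) :=
  closure (Set.range (princhar : M → CharSpace M))

/-- Filters on `J(M)`: nonempty collections of nonempty constructible ideals closed
under intersections and enlargements within `J(M)`. -/
def IsFilterOn [Mul M] (F : Set (CIdeal M)) : Prop :=
  F.Nonempty ∧ (∀ X ∈ F, (X.1 : Set M).Nonempty) ∧
  (∀ X ∈ F, ∀ Y ∈ F, ∀ Z : CIdeal M, Z.1 = X.1 ∩ Y.1 → Z ∈ F) ∧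
  (∀ X ∈ F, ∀ Y : CIdeal M, X.1 ⊆ Y.1 → Y ∈ F)

/-- Nonzero multiplicative `{0,1}`-valued maps on `J(M)`. -/
def IsChar [Mul M] (χ : CharSpace M) : Prop :=
  (∃ X, χ X = true) ∧
  ∀ X Y Z : CIdeal M, Z.1 = X.1 ∩ Y.1 → χ Z = (χ X && χ Y)

/-- Maximal characters: characters whose associated filter is maximal among filters. -/
def IsMaximalChar [Mul M] (χ : CharSpace M) : Prop :=
  IsChar χ ∧ IsFilterOn {X | χ X = true} ∧
  ∀ G : Set (CIdeal M), IsFilterOn G → {X | χ X = true} ⊆ G → G = {X | χ X = true}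

/-- The set of maximal characters `Ω_max(M)`. -/
def OmegaMax (M : Type*) [Mul M] : Set (CharSpace M) := {χ | IsMaximalChar χ}

/-- The boundary `∂Ω(M)`: the closure of the set of maximal characters. -/
noncomputable def BoundaryOmega (M : Type*) [Mul M] : Set (CharSpace M) :=
  closure (OmegaMax M)


section AuxLemmas

variable {M : Type*}

/-- The composite of a list of blocks. -/
noncomputable def blocks [Mul M] (l : List (M × M)) : M → Option M :=
  l.foldl (fun acc p => pcomp (pblock p) acc) pid

lemma pcomp_pid [Mul M] (g : M → Option M) : pcomp g pid = g := by
  funext s; rfl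

lemma blocks_foldl [Mul M] (l : List (M × M)) (h : M → Option M) :
    l.foldl (fun acc p => pcomp (pblock p) acc) h = pcomp (blocks l) h := by
  induction l generalizing h with
  | nil => funext s; simp [blocks, pcomp, pid]; cases h s <;> rfl
  | cons p l ih =>
    show List.foldl _ (pcomp (pblock p) h) l = _
    rw [ih]
    have : blocks (p :: l) = pcomp (blocks l) (pblock p) := by
      show List.foldl _ (pcomp (pblock p) pid) l = _
      rw [ih, pcomp_pid]
    rw [this]
    funext s
    simp [pcomp, Option.bind_assoc]; rfl

lemma blocks_cons [Mul M] (p : M × M) (l : List (M × M)) :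
    blocks (p :: l) = pcomp (blocks l) (pblock p) := by
  show List.foldl _ (pcomp (pblock p) pid) l = _
  rw [blocks_foldl, pcomp_pid]

lemma blocks_append [Mul M] (l l' : List (M × M)) :
    blocks (l ++ l') = pcomp (blocks l') (blocks l) := by
  unfold blocks
  rw [List.foldl_append, blocks_foldl]
  rfl

lemma inInvHull_iff [Mul M] (h : M → Option M) :
    InInvHull h ↔ ∃ l : List (M × M), l ≠ [] ∧ h = blocks l := Iff.rfl

lemma InInvHull.pcomp [Mul M] {g h : M → Option M}
    (hg : InInvHull g) (hh : InInvHull h) : InInvHull (pcomp g h) := by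
  obtain ⟨lg, hlg, rfl⟩ := hg
  obtain ⟨lh, hlh, rfl⟩ := hh
  exact ⟨lh ++ lg, by simp [hlh], (blocks_append lh lg).symm⟩

lemma pinv_translate [Mul M] {q t u : M}
    (h : pinv (ptransl q) t = some u) : q * u = t := by
  unfold pinv at h
  split_ifs at h with hc
  have hs := hc.choose_spec
  simp only [Option.some.injEq] at h
  rw [← h]
  simpa [ptransl] using hs

lemma pinv_translate_apply [Mul M] [IsLeftCancelMul M] (q t : M) :
    pinv (ptransl q) (q * t) = some t := by
  have hc : ∃ s, ptransl q s = some (q * t) := ⟨t, rfl⟩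
  unfold pinv
  rw [dif_pos hc]
  have hs : q * hc.choose = q * t := by
    have := hc.choose_spec
    simpa [ptransl] using this
  exact congrArg some (mul_left_cancel hs)

lemma pblock_apply [Mul M] (p : M × M) (s : M) :
    pblock p s = pinv (ptransl p.2) (p.1 * s) := rfl

lemma pblock_inv [Mul M] [IsLeftCancelMul M] {p : M × M} {s u : M}
    (h : pblock p s = some u) : pblock p.swap u = some s := by
  rw [pblock_apply] at h
  have h2 : p.2 * u = p.1 * s := pinv_translate h
  show pinv (ptransl p.1) (p.2 * u) = some s
  rw [h2, pinv_translate_apply]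

/-- The formal inverse word. -/
def pswapRev {M : Type*} (l : List (M × M)) : List (M × M) :=
  (l.map Prod.swap).reverse

lemma blocks_inv [Mul M] [IsLeftCancelMul M] :
    ∀ l : List (M × M), ∀ s t : M, blocks l s = some t →
      blocks (pswapRev l) t = some s := by
  intro l
  induction l with
  | nil =>
    intro s t h
    simp only [blocks, List.foldl_nil, pid, Option.some.injEq] at h
    simp [pswapRev, blocks, pid, h]
  | cons p l ih =>
    intro s t h
    rw [blocks_cons] at h
    unfold pcomp at h
    cases hb : pblock p s with
    | none => rw [hb] at h; simp at h
    | some u =>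
      rw [hb] at h
      simp only [Option.bind_some] at h
      have h2 := ih u t h
      have h3 := pblock_inv hb
      have h4 : pswapRev (p :: l) = pswapRev l ++ [p.swap] := by
        simp [pswapRev]
      rw [h4, blocks_append]
      show (blocks (pswapRev l) t).bind (blocks [p.swap]) = some s
      rw [h2, Option.bind_some]
      exact h3

/-- Every inverse-hull element admits an idempotent with the same domain,
fixing that domain pointwise. -/
lemma exists_idem [Mul M] [IsLeftCancelMul M] {h : M → Option M}
    (hh : InInvHull h) :
    ∃ e : M → Option M, InInvHull e ∧
      (∀ s ∈ pdom h, e s = some s) ∧ pdom e = pdom h := by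
  obtain ⟨l, hl, rfl⟩ := hh
  show ∃ e, InInvHull e ∧ (∀ s ∈ pdom (blocks l), e s = some s) ∧
    pdom e = pdom (blocks l)
  refine ⟨blocks (l ++ pswapRev l), ⟨l ++ pswapRev l, by simp [hl], rfl⟩, ?_, ?_⟩
  · intro s hs
    rw [blocks_append]
    obtain ⟨t, ht⟩ : ∃ t, blocks l s = some t := by
      rcases hx : blocks l s with _ | t
      · exact absurd hx hs
      · exact ⟨t, rfl⟩
    show (blocks l s).bind (blocks (pswapRev l)) = some s
    rw [ht, Option.bind_some]
    exact blocks_inv l s t ht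
  · ext s
    show ¬ blocks (l ++ pswapRev l) s = none ↔ ¬ blocks l s = none
    rw [blocks_append]
    show ¬ (blocks l s).bind (blocks (pswapRev l)) = none ↔ _
    rcases hx : blocks l s with _ | t
    · simp
    · have := blocks_inv l s t hx
      simp [this]

lemma IsConstructible.inter [Mul M] [IsLeftCancelMul M] {X Y : Set M}
    (hX : IsConstructible X) (hY : IsConstructible Y) :
    IsConstructible (X ∩ Y) := by
  obtain ⟨hx, hhx, rfl⟩ := hX
  obtain ⟨hy, hhy, rfl⟩ := hY
  obtain ⟨ex, hex, hexfix, hexdom⟩ := exists_idem hhx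
  obtain ⟨ey, hey, heyfix, heydom⟩ := exists_idem hhy
  refine ⟨pcomp ey ex, hey.pcomp hex, ?_⟩
  ext s
  show s ∈ pdom hx ∩ pdom hy ↔ ¬ (ex s).bind ey = none
  constructor
  · rintro ⟨hsx, hsy⟩
    rw [hexfix s hsx, Option.bind_some, heyfix s hsy]
    simp
  · intro hs
    rcases hx' : ex s with _ | t
    · rw [hx', Option.bind_none] at hs
      exact absurd rfl hs
    · have hsx : s ∈ pdom hx := by
        rw [← hexdom]; simp [pdom, hx']
      rw [hexfix s hsx, Option.bind_some] at hs
      have hsy : s ∈ pdom ey := hs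
      rw [heydom] at hsy
      exact ⟨hsx, hsy⟩

end AuxLemmas

/-- A nonempty constructible right ideal `X` of a left cancellative
monoid is not contained in a finite union of differences `Xs j ∖ (⋃ i, Xi j i)` in which
all the sets are constructible right ideals and, for each `j`, the family
`{Xi j i}` is a foundation set for `Xs j`. -/
theorem cstar_stmt0 {M : Type*} [Monoid M] [IsLeftCancelMul M]
    (X : Set M) (hX : IsConstructible X) (hXne : X.Nonempty)
    (n : ℕ) (Xs : Fin n → Set M) (ms : Fin n → ℕ) (hms : ∀ j, 1 ≤ ms j)
    (Xi : (j : Fin n) → Fin (ms j) → Set M)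
    (hXs : ∀ j, IsConstructible (Xs j))
    (hXi : ∀ j i, IsConstructible (Xi j i))
    (hfound : ∀ j, IsFoundation (Xs j) (Xi j)) :
    ¬ X ⊆ ⋃ j, (Xs j \ ⋃ i, Xi j i) := by
  intro hsub
  have key : ∀ k : ℕ, k ≤ n → ∃ Y : Set M, IsConstructible Y ∧ Y.Nonempty ∧ Y ⊆ X ∧
      ∀ j : Fin n, (j : ℕ) < k → ∀ y ∈ Y, y ∉ Xs j \ ⋃ i, Xi j i := by
    intro k
    induction k with
    | zero =>
      exact fun _ => ⟨X, hX, hXne, subset_rfl,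
        fun j hj => absurd hj (Nat.not_lt_zero _)⟩
    | succ k ih =>
      intro hk
      obtain ⟨Y, hYc, hYne, hYX, hYdisj⟩ := ih (Nat.le_of_succ_le hk)
      have hkn : k < n := hk
      rcases (Y ∩ Xs ⟨k, hkn⟩).eq_empty_or_nonempty with hempty | hne
      · refine ⟨Y, hYc, hYne, hYX, ?_⟩
        intro j' hj' y hy hmem
        rcases Nat.lt_succ_iff_lt_or_eq.mp hj' with h' | h'
        · exact hYdisj j' h' y hy hmem
        · have hje : j' = ⟨k, hkn⟩ := Fin.ext h'
          subst hje
          have hmem2 : y ∈ Y ∩ Xs ⟨k, hkn⟩ := ⟨hy, hmem.1⟩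
          rw [hempty] at hmem2
          exact hmem2
      · have hYXsc : IsConstructible (Y ∩ Xs ⟨k, hkn⟩) := hYc.inter (hXs _)
        obtain ⟨i, hi⟩ := (hfound ⟨k, hkn⟩).2 (Y ∩ Xs ⟨k, hkn⟩) hYXsc hne
          Set.inter_subset_right
        refine ⟨(Y ∩ Xs ⟨k, hkn⟩) ∩ Xi ⟨k, hkn⟩ i, hYXsc.inter (hXi _ i), hi, ?_, ?_⟩
        · exact fun y hy => hYX hy.1.1
        · intro j' hj' y hy hmem
          rcases Nat.lt_succ_iff_lt_or_eq.mp hj' with h' | h'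
          · exact hYdisj j' h' y hy.1.1 hmem
          · have hje : j' = ⟨k, hkn⟩ := Fin.ext h'
            subst hje
            exact hmem.2 (Set.mem_iUnion.mpr ⟨i, hy.2⟩)
  obtain ⟨Y, _, ⟨y, hy⟩, hYX, hdisj⟩ := key n le_rfl
  have := hsub (hYX hy)
  obtain ⟨j, hj⟩ := Set.mem_iUnion.mp this
  exact hdisj j j.isLt y hy hj

end SgC
end

section
/- Let S be a left cancellative monoid and X, X_1, …, X_m ∈ J(S) (m ≥ 1) with X_i ⊆ X for all i. Then the set U = {η ∈ Ω(S) : η(X) = 1 and η(X_i) = 0 for i = 1,…,m} is disjoint from ∂Ω(S) if and only if {X_1, …, X_m} is a foundation set for X. -/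
open scoped Classical

namespace SgC

variable {M : Type*}

/-! ### Auxiliary development -/

section PartialMaps

lemma pcomp_pid_right (f : M → Option M) : pcomp f pid = f := rfl

lemma pcomp_pid_left (f : M → Option M) : pcomp pid f = f := by
  funext s; unfold pcomp pid; cases f s <;> rfl

lemma pcomp_assoc (h g f : M → Option M) :
    pcomp h (pcomp g f) = pcomp (pcomp h g) f := by
  funext s; unfold pcomp; cases f s <;> rfl

variable [Mul M]

/-- The fold defining elements of the inverse hull. -/
noncomputable def pfold (l : List (M × M)) : M → Option M :=
  l.foldl (fun acc p => pcomp (pblock p) acc) pid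

lemma foldl_eq_pcomp (l : List (M × M)) (h : M → Option M) :
    l.foldl (fun acc p => pcomp (pblock p) acc) h = pcomp (pfold l) h := by
  induction l generalizing h with
  | nil => simp [pfold, pcomp_pid_left, List.foldl_nil]
  | cons q l ih =>
      show l.foldl _ (pcomp (pblock q) h) = pcomp (pfold (q :: l)) h
      have h1 : pfold (q :: l) = pcomp (pfold l) (pblock q) := by
        show l.foldl _ (pcomp (pblock q) pid) = _
        rw [ih, pcomp_pid_right]
      rw [ih, h1, pcomp_assoc]

lemma pfold_cons (q : M × M) (l : List (M × M)) :
    pfold (q :: l) = pcomp (pfold l) (pblock q) := by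
  rw [pfold, List.foldl_cons, foldl_eq_pcomp, pcomp_pid_right]

lemma pfold_append (l l' : List (M × M)) :
    pfold (l ++ l') = pcomp (pfold l') (pfold l) := by
  rw [pfold, List.foldl_append, foldl_eq_pcomp]; rfl

/-- The list giving the inverse of an inverse-hull element. -/
def pswap (l : List (M × M)) : List (M × M) := (l.map Prod.swap).reverse

lemma pswap_cons (q : M × M) (l : List (M × M)) :
    pswap (q :: l) = pswap l ++ [q.swap] := by
  simp [pswap]

lemma pswap_pswap (l : List (M × M)) : pswap (pswap l) = l := by
  simp [pswap, List.map_reverse, List.map_map, Function.comp]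

variable [IsLeftCancelMul M]

lemma pblock_some_iff {p : M × M} {s t : M} :
    pblock p s = some t ↔ p.2 * t = p.1 * s := by
  have hrw : pblock p s = pinv (ptransl p.2) (p.1 * s) := rfl
  rw [hrw]
  unfold pinv ptransl
  split_ifs with h
  · rw [Option.some_inj]
    have hs := h.choose_spec
    rw [Option.some_inj] at hs
    constructor
    · rintro rfl; exact hs
    · intro ht; exact mul_left_cancel (hs.trans ht.symm)
  · constructor
    · intro ht; exact absurd ht (by simp)
    · intro ht; exact absurd ⟨t, by rw [ht]⟩ h

lemma pfold_inv {l : List (M × M)} {s t : M} (h : pfold l s = some t) :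
    pfold (pswap l) t = some s := by
  induction l generalizing s t with
  | nil =>
      have : s = t := by simpa [pfold, pid] using h
      subst this; simp [pswap, pfold, pid]
  | cons q l ih =>
      rw [pfold_cons] at h
      obtain ⟨u, hu, hl⟩ := Option.bind_eq_some_iff.mp h
      rw [pswap_cons, pfold_append]
      show ((pfold (pswap l)) t).bind _ = _
      rw [ih hl]
      show pfold [q.swap] u = some s
      have hb : pblock q.swap u = some s := by
        rw [pblock_some_iff]
        exact (pblock_some_iff.mp hu).symm
      rw [pfold_cons]
      show (pblock q.swap u).bind (pfold []) = some s
      rw [hb]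
      rfl

lemma isConstructible_inter {X Y : Set M} (hX : IsConstructible X)
    (hY : IsConstructible Y) : IsConstructible (X ∩ Y) := by
  obtain ⟨h, ⟨l, hl, rfl⟩, rfl⟩ := hX
  obtain ⟨g, ⟨l', hl', rfl⟩, rfl⟩ := hY
  refine ⟨pfold (l ++ (pswap l ++ l')), ⟨_, by simp [hl], rfl⟩, ?_⟩
  ext s
  show (pfold l s ≠ none ∧ pfold l' s ≠ none) ↔ pfold (l ++ (pswap l ++ l')) s ≠ none
  have key : pfold (l ++ (pswap l ++ l')) s
      = (pfold l s).bind (fun t => ((pfold (pswap l)) t).bind (pfold l')) := by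
    rw [pfold_append, pfold_append]; rfl
  rw [key]
  cases hfs : pfold l s with
  | none => simp
  | some t =>
      have hinv := pfold_inv hfs
      simp [hinv]

/-- Intersection of constructible ideals, as a constructible ideal. -/
noncomputable def cinter (X Y : CIdeal M) : CIdeal M :=
  ⟨X.1 ∩ Y.1, isConstructible_inter X.2 Y.2⟩

end PartialMaps

section Filters

variable [Mul M] [IsLeftCancelMul M]

lemma filter_finset_inter {F : Set (CIdeal M)} (hF : IsFilterOn F)
    {α : Type*} [DecidableEq α] (s : Finset α) (g : α → CIdeal M)
    (W₀ : CIdeal M) (hW₀ : W₀ ∈ F) (hg : ∀ a ∈ s, g a ∈ F) :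
    ∃ W ∈ F, W.1 ⊆ W₀.1 ∧ ∀ a ∈ s, W.1 ⊆ (g a).1 := by
  classical
  revert hg
  induction s using Finset.induction_on with
  | empty => exact fun _ => ⟨W₀, hW₀, subset_rfl, by simp⟩
  | @insert a s ha ih =>
      intro hg
      obtain ⟨W, hWF, hW0, hWg⟩ := ih (fun b hb => hg b (Finset.mem_insert_of_mem hb))
      refine ⟨cinter W (g a), hF.2.2.1 W hWF (g a) (hg a (Finset.mem_insert_self a s)) _ rfl,
        Set.inter_subset_left.trans hW0, ?_⟩
      intro b hb
      rcases Finset.mem_insert.mp hb with rfl | hb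
      · exact Set.inter_subset_right
      · exact Set.inter_subset_left.trans (hWg b hb)

lemma exists_maximal_filter {F₀ : Set (CIdeal M)} (h₀ : IsFilterOn F₀) :
    ∃ F, IsFilterOn F ∧ F₀ ⊆ F ∧ ∀ G, IsFilterOn G → F ⊆ G → G = F := by
  have hzorn : ∀ c ⊆ {G : Set (CIdeal M) | IsFilterOn G}, IsChain (· ⊆ ·) c →
      c.Nonempty → ∃ ub ∈ {G : Set (CIdeal M) | IsFilterOn G}, ∀ s ∈ c, s ⊆ ub := by
    intro c hc hchain hne
    obtain ⟨G, hG⟩ := hne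
    refine ⟨⋃₀ c, ?_, fun s hs => Set.subset_sUnion_of_mem hs⟩
    refine ⟨?_, ?_, ?_, ?_⟩
    · obtain ⟨Z, hZ⟩ := (hc hG).1
      exact ⟨Z, Set.mem_sUnion.2 ⟨G, hG, hZ⟩⟩
    · rintro X ⟨G', hG', hX⟩
      exact (hc hG').2.1 X hX
    · rintro X ⟨G1, h1, hX⟩ Y ⟨G2, h2, hY⟩ Z hZ
      rcases hchain.total h1 h2 with h | h
      · exact ⟨G2, h2, (hc h2).2.2.1 X (h hX) Y hY Z hZ⟩
      · exact ⟨G1, h1, (hc h1).2.2.1 X hX Y (h hY) Z hZ⟩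
    · rintro X ⟨G', hG', hX⟩ Y hY
      exact ⟨G', hG', (hc hG').2.2.2 X hX Y hY⟩
  obtain ⟨F, hsub, hF, hmax⟩ :=
    zorn_subset_nonempty {G : Set (CIdeal M) | IsFilterOn G} hzorn F₀ h₀
  exact ⟨F, hF, hsub, fun G hG hFG => subset_antisymm (hmax hG hFG) hFG⟩

lemma maximal_filter_disjoint {F : Set (CIdeal M)} (hF : IsFilterOn F)
    (hmax : ∀ G, IsFilterOn G → F ⊆ G → G = F) {Z : CIdeal M} (hZ : Z ∉ F) :
    ∃ W ∈ F, W.1 ∩ Z.1 = ∅ := by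
  by_contra hcon
  push_neg at hcon
  set G : Set (CIdeal M) := {V | ∃ W ∈ F, W.1 ∩ Z.1 ⊆ V.1} with hGdef
  have hFG : F ⊆ G := fun W hW => ⟨W, hW, Set.inter_subset_left⟩
  have hZG : Z ∈ G := by
    obtain ⟨W, hW⟩ := hF.1
    exact ⟨W, hW, Set.inter_subset_right⟩
  have hGfil : IsFilterOn G := by
    refine ⟨⟨Z, hZG⟩, ?_, ?_, ?_⟩
    · rintro V ⟨W, hW, hsub⟩
      exact (hcon W hW).mono hsub
    · rintro V1 ⟨W1, hW1, hs1⟩ V2 ⟨W2, hW2, hs2⟩ V hV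
      refine ⟨cinter W1 W2, hF.2.2.1 W1 hW1 W2 hW2 _ rfl, ?_⟩
      rw [hV]
      intro x hx
      exact ⟨hs1 ⟨hx.1.1, hx.2⟩, hs2 ⟨hx.1.2, hx.2⟩⟩
    · rintro V1 ⟨W, hW, hs⟩ V2 hV2
      exact ⟨W, hW, hs.trans hV2⟩
  have := hmax G hGfil hFG
  rw [this] at hZG
  exact hZ hZG

lemma maximal_filter_char {F : Set (CIdeal M)} (hF : IsFilterOn F)
    (hmax : ∀ G, IsFilterOn G → F ⊆ G → G = F) :
    IsMaximalChar (fun Z => decide (Z ∈ F)) := by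
  classical
  have hset : {X : CIdeal M | decide (X ∈ F) = true} = F := by
    ext Z; simp
  refine ⟨⟨?_, ?_⟩, ?_, ?_⟩
  · obtain ⟨Z, hZ⟩ := hF.1
    exact ⟨Z, decide_eq_true hZ⟩
  · intro A B Z hZ
    by_cases hA : A ∈ F
    · by_cases hB : B ∈ F
      · have hZF : Z ∈ F := hF.2.2.1 A hA B hB Z hZ
        simp [hA, hB, hZF]
      · have hZF : Z ∉ F := fun h => hB (hF.2.2.2 Z h B (hZ ▸ Set.inter_subset_right))
        simp [hB, hZF]
    · have hZF : Z ∉ F := fun h => hA (hF.2.2.2 Z h A (hZ ▸ Set.inter_subset_left))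
      simp [hA, hZF]
  · rw [hset]; exact hF
  · intro G hG hsub
    rw [hset] at hsub ⊢
    exact hmax G hG hsub

end Filters

section CharTopology

variable [Mul M] [IsLeftCancelMul M]

lemma maximal_char_mem_Omega {F : Set (CIdeal M)} (hF : IsFilterOn F)
    (hmax : ∀ G, IsFilterOn G → F ⊆ G → G = F) :
    (fun Z => decide (Z ∈ F)) ∈ Omega M := by
  classical
  rw [Omega, mem_closure_iff_nhds]
  intro U hU
  rw [nhds_pi, Filter.mem_pi] at hU
  obtain ⟨I, hIfin, V, hV, hIV⟩ := hU
  have hsel : ∀ Z : CIdeal M, ∃ W ∈ F, (Z ∉ F → W.1 ∩ Z.1 = ∅) ∧ (Z ∈ F → W = Z) := by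
    intro Z
    by_cases hZ : Z ∈ F
    · exact ⟨Z, hZ, fun h => absurd hZ h, fun _ => rfl⟩
    · obtain ⟨W, hW, hdis⟩ := maximal_filter_disjoint hF hmax hZ
      exact ⟨W, hW, fun _ => hdis, fun h => absurd h hZ⟩
  choose gsel hgF hgdis hgeq using hsel
  obtain ⟨W₀, hW₀⟩ := hF.1
  obtain ⟨W, hWF, _, hWsub⟩ :=
    filter_finset_inter hF hIfin.toFinset gsel W₀ hW₀ (fun Z _ => hgF Z)
  obtain ⟨s, hs⟩ := hF.2.1 W hWF
  have hagree : ∀ Z ∈ I, princhar s Z = decide (Z ∈ F) := by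
    intro Z hZI
    have hWZ : W.1 ⊆ (gsel Z).1 := hWsub Z (hIfin.mem_toFinset.2 hZI)
    by_cases hZ : Z ∈ F
    · have : s ∈ Z.1 := by
        have := hWZ hs
        rwa [hgeq Z hZ] at this
      simp [princhar, this, hZ]
    · have : s ∉ Z.1 := by
        intro hsZ
        have : s ∈ (gsel Z).1 ∩ Z.1 := ⟨hWZ hs, hsZ⟩
        rw [hgdis Z hZ] at this
        exact this
      simp [princhar, this, hZ]
  refine ⟨princhar s, hIV ?_, Set.mem_range_self s⟩
  intro Z hZI
  rw [hagree Z hZI]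
  exact mem_of_mem_nhds (hV Z)

end CharTopology


/-- For constructible right ideals `X₁, …, Xₘ ⊆ X` (`m ≥ 1`) of a left
cancellative monoid, the set `U = {η ∈ Ω(S) : η(X) = 1, η(Xᵢ) = 0 for all i}` is
disjoint from `∂Ω(S)` if and only if `{X₁, …, Xₘ}` is a foundation set for `X`. -/
theorem cstar_stmt1 {M : Type*} [Monoid M] [IsLeftCancelMul M]
    (m : ℕ) (hm : 1 ≤ m) (X : CIdeal M) (Xi : Fin m → CIdeal M)
    (hsub : ∀ i, (Xi i).1 ⊆ X.1) :
    Disjoint {η | η ∈ Omega M ∧ η X = true ∧ ∀ i, η (Xi i) = false}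
      (BoundaryOmega M)
    ↔ IsFoundation X.1 (fun i => (Xi i).1) := by
  classical
  constructor
  · -- disjointness implies foundation
    intro hdisj
    refine ⟨hsub, ?_⟩
    intro Y hYc hYne hYX
    by_contra hno
    push_neg at hno
    have hnoi : ∀ i, Y ∩ (Xi i).1 = ∅ := hno
    have h₀ : IsFilterOn {Z : CIdeal M | Y ⊆ Z.1} := by
      refine ⟨⟨⟨Y, hYc⟩, show Y ⊆ Y from subset_rfl⟩, fun Z hZ => hYne.mono hZ, ?_, ?_⟩
      · intro A hA B hB Z hZ
        rw [Set.mem_setOf_eq, hZ]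
        exact Set.subset_inter hA hB
      · intro A hA B hAB
        exact hA.trans hAB
    obtain ⟨F, hFfil, hF₀, hFmax⟩ := exists_maximal_filter h₀
    set χ : CharSpace M := fun Z => decide (Z ∈ F) with hχdef
    have hχmax : IsMaximalChar χ := maximal_filter_char hFfil hFmax
    have hχΩ : χ ∈ Omega M := maximal_char_mem_Omega hFfil hFmax
    have hXF : X ∈ F := hF₀ hYX
    have hXiF : ∀ i, Xi i ∉ F := by
      intro i hi
      have hYF : (⟨Y, hYc⟩ : CIdeal M) ∈ F := hF₀ (show Y ⊆ Y from subset_rfl)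
      have hZF : cinter ⟨Y, hYc⟩ (Xi i) ∈ F := hFfil.2.2.1 _ hYF _ hi _ rfl
      have := hFfil.2.1 _ hZF
      rw [show (cinter (⟨Y, hYc⟩ : CIdeal M) (Xi i)).1 = Y ∩ (Xi i).1 from rfl,
        hnoi i] at this
      exact Set.not_nonempty_empty this
    have hχU : χ ∈ {η | η ∈ Omega M ∧ η X = true ∧ ∀ i, η (Xi i) = false} :=
      ⟨hχΩ, decide_eq_true hXF, fun i => decide_eq_false (hXiF i)⟩
    have hχB : χ ∈ BoundaryOmega M := subset_closure hχmax
    exact (Set.disjoint_left.mp hdisj hχU hχB).elim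
  · -- foundation implies disjointness
    intro hfound
    set V : Set (CharSpace M) := {η | η X = true ∧ ∀ i, η (Xi i) = false} with hVdef
    have hVopen : IsOpen V := by
      have hVeq : V = (fun η : CharSpace M => η X) ⁻¹' {true} ∩
          ⋂ i, (fun η : CharSpace M => η (Xi i)) ⁻¹' {false} := by
        ext η
        simp [hVdef, Set.mem_iInter]
      rw [hVeq]
      exact (((continuous_apply X).isOpen_preimage _ (isOpen_discrete _)).inter
        (isOpen_iInter_of_finite fun i =>
          (continuous_apply (Xi i)).isOpen_preimage _ (isOpen_discrete _)))
    have hmaxV : OmegaMax M ⊆ Vᶜ := by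
      rintro χ ⟨hchar, hfil, hmx⟩ ⟨hχX, hχXi⟩
      set F : Set (CIdeal M) := {Z | χ Z = true} with hFdef
      have hXF : X ∈ F := hχX
      have hXiF : ∀ i, Xi i ∉ F := by
        intro i hi
        rw [hFdef, Set.mem_setOf_eq, hχXi i] at hi
        exact Bool.false_ne_true hi
      have hdisW : ∀ i : Fin m, ∃ W ∈ F, W.1 ∩ (Xi i).1 = ∅ :=
        fun i => maximal_filter_disjoint hfil hmx (hXiF i)
      choose Wsel hWF hWdis using hdisW
      obtain ⟨W, hWmem, hWX, hWsub⟩ :=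
        filter_finset_inter hfil (Finset.univ : Finset (Fin m)) Wsel X hXF
          (fun i _ => hWF i)
      obtain ⟨i, t, htW, htXi⟩ := hfound.2 W.1 W.2 (hfil.2.1 W hWmem) hWX
      have : t ∈ (Wsel i).1 ∩ (Xi i).1 :=
        ⟨hWsub i (Finset.mem_univ i) htW, htXi⟩
      rw [hWdis i] at this
      exact this
    have hBsub : BoundaryOmega M ⊆ Vᶜ :=
      closure_minimal hmaxV hVopen.isClosed_compl
    rw [Set.disjoint_left]
    intro η hηU hηB
    exact hBsub hηB ⟨hηU.2.1, hηU.2.2⟩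

end SgC
end
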